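/- Let X, U be locally compact Polish spaces and μ a probability measure on X. If γ is a μ-stochastic kernel from X to U (so x ↦ γ(x)(D) is measurable for all Borel D and γ(x) ∈ P(U) for all x), then for every f ∈ L₁(μ, C₀(U)) the map x ↦ ∫_U f(x)(u) γ(x)(du) is measurable and μ-integrable, and the functional f ↦ ∫_X ∫_U f(x)(u) γ(x)(du) μ(dx) is a continuous linear functional on L₁(μ, C₀(U)) of norm at most 1. -/

import Mathlib

open MeasureTheory

theorem stmt_18 {X : Type*} [TopologicalSpace X] [PolishSpace X] [LocallyCompactSpace X]
    [MeasurableSpace X] [BorelSpace X]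
    {U : Type*} [TopologicalSpace U] [PolishSpace U] [LocallyCompactSpace U]
    [MeasurableSpace U] [BorelSpace U]
    (μ : Measure X) [IsProbabilityMeasure μ]
    (γ : X → Measure U)
    (hγmeas : ∀ D : Set U, MeasurableSet D → Measurable fun x => γ x D)
    (hγprob : ∀ x, IsProbabilityMeasure (γ x)) :
    ∀ f : X → ZeroAtInftyContinuousMap U ℝ,
      AEStronglyMeasurable f μ → Integrable (fun x => ‖f x‖) μ →
      (AEStronglyMeasurable (fun x => ∫ u, f x u ∂(γ x)) μ ∧
       Integrable (fun x => ∫ u, f x u ∂(γ x)) μ ∧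
       |∫ x, ∫ u, f x u ∂(γ x) ∂μ| ≤ ∫ x, ‖f x‖ ∂μ) ∧
      (∀ g : X → ZeroAtInftyContinuousMap U ℝ,
        AEStronglyMeasurable g μ → Integrable (fun x => ‖g x‖) μ →
        ∀ a b : ℝ,
          ∫ x, ∫ u, (a • f x + b • g x) u ∂(γ x) ∂μ =
            a * (∫ x, ∫ u, f x u ∂(γ x) ∂μ) + b * (∫ x, ∫ u, g x u ∂(γ x) ∂μ)) := by
  -- package γ as a Markov kernel
  have hγm : Measurable γ := Measure.measurable_of_measurable_coe γ (fun s hs => hγmeas s hs)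
  let κ : ProbabilityTheory.Kernel X U := ⟨γ, hγm⟩
  haveI : ProbabilityTheory.IsMarkovKernel κ := ⟨fun x => hγprob x⟩
  -- pointwise bound
  have hbd : ∀ (f : X → ZeroAtInftyContinuousMap U ℝ) (x : X),
      ‖∫ u, f x u ∂(γ x)‖ ≤ ‖f x‖ := by
    intro f x
    haveI := hγprob x
    calc ‖∫ u, f x u ∂(γ x)‖ ≤ ∫ u, ‖f x u‖ ∂(γ x) := norm_integral_le_integral_norm _
      _ ≤ ∫ u, ‖f x‖ ∂(γ x) := by
          refine integral_mono (((f x).toBCF.integrable (γ x)).norm) (integrable_const _) ?_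
          intro u
          calc ‖f x u‖ = ‖(f x).toBCF u‖ := rfl
            _ ≤ ‖(f x).toBCF‖ := (f x).toBCF.norm_coe_le_norm u
            _ = ‖f x‖ := ZeroAtInftyContinuousMap.norm_toBCF_eq_norm
      _ = ‖f x‖ := by simp
  have key : ∀ f : X → ZeroAtInftyContinuousMap U ℝ,
      AEStronglyMeasurable f μ → Integrable (fun x => ‖f x‖) μ →
      AEStronglyMeasurable (fun x => ∫ u, f x u ∂(γ x)) μ ∧
      Integrable (fun x => ∫ u, f x u ∂(γ x)) μ := by
    intro f hf hint
    have hgsm : StronglyMeasurable (hf.mk f) := hf.stronglyMeasurable_mk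
    have hfg : f =ᵐ[μ] hf.mk f := hf.ae_eq_mk
    have hsm2 : StronglyMeasurable (fun p : X × U => (hf.mk f) p.1 p.2) := by
      have hc : Continuous (fun p : BoundedContinuousFunction U ℝ × U => p.1 p.2) :=
        continuous_eval
      exact hc.comp_stronglyMeasurable
        (((ZeroAtInftyContinuousMap.isometry_toBCF.continuous).comp_stronglyMeasurable
          (hgsm.comp_measurable measurable_fst)).prodMk
          (stronglyMeasurable_id.comp_measurable measurable_snd))
    have hgint : StronglyMeasurable (fun x => ∫ u, (hf.mk f) x u ∂(κ x)) :=
      hsm2.integral_kernel_prod_right'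
    have haesm : AEStronglyMeasurable (fun x => ∫ u, f x u ∂(γ x)) μ := by
      refine ⟨fun x => ∫ u, (hf.mk f) x u ∂(γ x), hgint, ?_⟩
      filter_upwards [hfg] with x hx
      simp [hx]
    refine ⟨haesm, ?_⟩
    exact Integrable.mono' hint haesm (Filter.Eventually.of_forall (hbd f))
  intro f hf hfint
  obtain ⟨hfaesm, hfI⟩ := key f hf hfint
  refine ⟨⟨hfaesm, hfI, ?_⟩, ?_⟩
  · rw [← Real.norm_eq_abs]
    calc ‖∫ x, ∫ u, f x u ∂(γ x) ∂μ‖ ≤ ∫ x, ‖∫ u, f x u ∂(γ x)‖ ∂μ :=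
        norm_integral_le_integral_norm _
      _ ≤ ∫ x, ‖f x‖ ∂μ :=
        integral_mono hfI.norm hfint (fun x => hbd f x)
  · intro g hg hgint a b
    obtain ⟨hgaesm, hgI⟩ := key g hg hgint
    have hpt : ∀ x, ∫ u, (a • f x + b • g x) u ∂(γ x)
        = a * (∫ u, f x u ∂(γ x)) + b * (∫ u, g x u ∂(γ x)) := by
      intro x
      haveI := hγprob x
      have h1 : Integrable (fun u => a * f x u) (γ x) :=
        ((f x).toBCF.integrable (γ x)).const_mul a
      have h2 : Integrable (fun u => b * g x u) (γ x) :=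
        ((g x).toBCF.integrable (γ x)).const_mul b
      have : (fun u => (a • f x + b • g x) u) = fun u => a * f x u + b * g x u := by
        ext u; simp [mul_comm]
      rw [this, integral_add h1 h2, integral_const_mul, integral_const_mul]
    simp only [hpt]
    rw [integral_add (hfI.const_mul a) (hgI.const_mul b), integral_const_mul, integral_const_mul]
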